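/- (Key step in the proof of Lemma 2: smoothness of the flattening map h^⊥.) Let M be a smooth manifold, let Φ : ℝ × M → M be a smooth map (for example, the flow of a smooth vector field), and let h : M → ℝ be a smooth function such that for every x ∈ M and every t ∈ ℝ the derivative of the real function s ↦ h(Φ(s, x)) at s = t is strictly positive. Suppose τ : M → ℝ is a function satisfying h(Φ(τ(x), x)) = 0 for all x ∈ M (so τ(x) is the unique time at which the curve s ↦ Φ(s, x) crosses the level set h = 0). Then τ is a smooth function on M. -/

import Mathlib

open scoped Manifold
open Set Filter

/-- Key step in the proof of Lemma 2 (smoothness of the flattening map `h^⊥`):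
if `Φ : ℝ × M → M` is smooth, `h : M → ℝ` is smooth, the derivative of
`s ↦ h (Φ (s, x))` is strictly positive at every time `t` for every `x`, and
`τ : M → ℝ` satisfies `h (Φ (τ x, x)) = 0` for all `x`, then `τ` is smooth. -/
theorem flattening_stmt3
    {E : Type*} [NormedAddCommGroup E] [NormedSpace ℝ E] [FiniteDimensional ℝ E]
    {H : Type*} [TopologicalSpace H] (I : ModelWithCorners ℝ E H) [I.Boundaryless]
    {M : Type*} [TopologicalSpace M] [T2Space M] [ChartedSpace H M]
    [IsManifold I (⊤ : ℕ∞) M]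
    (Φ : ℝ × M → M) (hΦ : ContMDiff ((𝓘(ℝ, ℝ)).prod I) I (⊤ : ℕ∞) Φ)
    (h : M → ℝ) (hh : ContMDiff I 𝓘(ℝ, ℝ) (⊤ : ℕ∞) h)
    (hpos : ∀ (x : M) (t : ℝ), 0 < deriv (fun s => h (Φ (s, x))) t)
    (τ : M → ℝ) (hτ : ∀ x : M, h (Φ (τ x, x)) = 0) :
    ContMDiff I 𝓘(ℝ, ℝ) (⊤ : ℕ∞) τ := by
  have hmono : ∀ x : M, StrictMono (fun s => h (Φ (s, x))) :=
    fun x => strictMono_of_deriv_pos (hpos x)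
  have hone : (1 : WithTop ℕ∞) ≤ ((⊤ : ℕ∞) : WithTop ℕ∞) := by
    exact_mod_cast le_top
  intro x₀
  set ψ := extChartAt I x₀ with hψ
  set y₀ := ψ x₀ with hy₀
  set t₀ := τ x₀ with ht₀
  -- the map g in chart coordinates
  set g : ℝ × E → ℝ := fun p => h (Φ (p.1, ψ.symm p.2)) with hgdef
  have hsymm : ψ.symm y₀ = x₀ := (extChartAt I x₀).left_inv (mem_extChartAt_source x₀)
  set p₀ : ℝ × E := (t₀, y₀) with hp₀
  -- smoothness of g near p₀
  have hgC : ContDiffAt ℝ (⊤ : ℕ∞) g p₀ := by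
    have h1 : ContMDiffOn ((𝓘(ℝ, ℝ)).prod 𝓘(ℝ, E)) ((𝓘(ℝ, ℝ)).prod I) (⊤ : ℕ∞)
        (Prod.map (id : ℝ → ℝ) ψ.symm) ((univ : Set ℝ) ×ˢ ψ.target) :=
      (contMDiff_id.contMDiffOn).prodMap (contMDiffOn_extChartAt_symm x₀)
    have h2 : ContMDiffOn ((𝓘(ℝ, ℝ)).prod 𝓘(ℝ, E)) 𝓘(ℝ, ℝ) (⊤ : ℕ∞) g
        ((univ : Set ℝ) ×ˢ ψ.target) :=
      ((hh.comp hΦ).comp_contMDiffOn h1)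
    have h3 : ContDiffOn ℝ (⊤ : ℕ∞) g ((univ : Set ℝ) ×ˢ ψ.target) := by
      have h2' : ContMDiffOn 𝓘(ℝ, ℝ × E) 𝓘(ℝ, ℝ) (⊤ : ℕ∞) g ((univ : Set ℝ) ×ˢ ψ.target) := by
        rw [modelWithCornersSelf_prod, ← chartedSpaceSelf_prod]
        exact h2
      exact h2'.contDiffOn
    exact h3.contDiffAt (((isOpen_univ.prod (isOpen_extChartAt_target x₀))).mem_nhds
      ⟨mem_univ _, (extChartAt I x₀).map_source (mem_extChartAt_source x₀)⟩)
  -- derivative data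
  set Dg : ℝ × E →L[ℝ] ℝ := fderiv ℝ g p₀ with hDgdef
  have hDg : HasFDerivAt g Dg p₀ := (hgC.differentiableAt (ENat.one_le_iff_ne_zero_withTop.mp hone)).hasFDerivAt
  set a : ℝ := Dg (1, 0) with ha
  have hcurve : HasDerivAt (fun s => g (s, y₀)) a t₀ := by
    have h1 : HasDerivAt (fun s : ℝ => (s, y₀)) ((1 : ℝ), (0 : E)) t₀ :=
      (hasDerivAt_id t₀).prodMk (hasDerivAt_const t₀ y₀)
    exact hDg.comp_hasDerivAt t₀ h1
  have hgy0 : (fun s => g (s, y₀)) = fun s => h (Φ (s, x₀)) := by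
    funext s; simp [hgdef, hsymm]
  have ha_pos : 0 < a := by
    have := hcurve.deriv
    rw [hgy0] at this
    rw [← this] at *
    exact this ▸ (this ▸ hpos x₀ t₀)
  have ha_ne : a ≠ 0 := ne_of_gt ha_pos
  have hlin : ∀ (s : ℝ) (y : E), Dg (s, y) = s * a + Dg (0, y) := by
    intro s y
    have : ((s : ℝ), y) = s • ((1 : ℝ), (0 : E)) + ((0 : ℝ), y) := by
      simp [Prod.smul_mk]
    rw [this, map_add, map_smul, smul_eq_mul, ha]
  -- the map Ψ and its invertible derivative
  set Ψ : ℝ × E → ℝ × E := fun p => (g p, p.2) with hΨdef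
  have hΨC : ContDiffAt ℝ (⊤ : ℕ∞) Ψ p₀ := hgC.prodMk contDiffAt_snd
  set A : (ℝ × E) ≃L[ℝ] (ℝ × E) := ContinuousLinearEquiv.equivOfInverse
    (Dg.prod (ContinuousLinearMap.snd ℝ ℝ E))
    (((a⁻¹ • (ContinuousLinearMap.fst ℝ ℝ E - Dg.comp
        ((ContinuousLinearMap.inr ℝ ℝ E).comp (ContinuousLinearMap.snd ℝ ℝ E))))).prod
      (ContinuousLinearMap.snd ℝ ℝ E))
    (by
      rintro ⟨s, y⟩
      refine Prod.ext ?_ rfl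
      simp only [ContinuousLinearMap.prod_apply, ContinuousLinearMap.smul_apply,
        ContinuousLinearMap.sub_apply, ContinuousLinearMap.coe_fst',
        ContinuousLinearMap.coe_comp', Function.comp_apply, ContinuousLinearMap.coe_snd',
        ContinuousLinearMap.inr_apply, smul_eq_mul]
      rw [hlin s y]
      field_simp
      ring)
    (by
      rintro ⟨u, y⟩
      refine Prod.ext ?_ rfl
      simp only [ContinuousLinearMap.prod_apply, ContinuousLinearMap.smul_apply,
        ContinuousLinearMap.sub_apply, ContinuousLinearMap.coe_fst',
        ContinuousLinearMap.coe_comp', Function.comp_apply, ContinuousLinearMap.coe_snd',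
        ContinuousLinearMap.inr_apply, smul_eq_mul]
      rw [hlin (a⁻¹ * (u - Dg (0, y))) y]
      field_simp
      ring) with hA
  have hAeq : (A : (ℝ × E) →L[ℝ] (ℝ × E)) = Dg.prod (ContinuousLinearMap.snd ℝ ℝ E) := rfl
  have hΨD : HasFDerivAt Ψ (A : (ℝ × E) →L[ℝ] (ℝ × E)) p₀ := by
    rw [hAeq]
    exact hDg.prodMk hasFDerivAt_snd
  -- local inverse
  set L : ℝ × E → ℝ × E := hΨC.localInverse hΨD (ENat.one_le_iff_ne_zero_withTop.mp hone) with hL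
  have hLsm : ContDiffAt ℝ (⊤ : ℕ∞) L (Ψ p₀) := hΨC.to_localInverse hΨD (ENat.one_le_iff_ne_zero_withTop.mp hone)
  have hgp₀ : g p₀ = 0 := by simp [hgdef, hp₀, hsymm, ht₀, hτ x₀]
  have hΨp₀ : Ψ p₀ = ((0 : ℝ), y₀) := by rw [hΨdef]; exact Prod.ext hgp₀ rfl
  have hri : ∀ᶠ q in nhds (Ψ p₀), Ψ (L q) = q :=
    (hΨC.hasStrictFDerivAt' hΨD (ENat.one_le_iff_ne_zero_withTop.mp hone)).eventually_right_inverse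
  -- candidate smooth function
  set σ : M → ℝ := fun x => (L (0, ψ x)).1 with hσ
  have hσsm : ContMDiffAt I 𝓘(ℝ, ℝ) (⊤ : ℕ∞) σ x₀ := by
    have h1 : ContDiffAt ℝ (⊤ : ℕ∞) (fun y : E => (L ((0 : ℝ), y)).1) y₀ := by
      have h2 : ContDiffAt ℝ (⊤ : ℕ∞) (fun y : E => ((0 : ℝ), y)) y₀ :=
        (contDiff_const.prodMk contDiff_id).contDiffAt
      have h3 : ContDiffAt ℝ (⊤ : ℕ∞) L ((0 : ℝ), y₀) := by rw [← hΨp₀]; exact hLsm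
      exact (h3.comp y₀ h2).fst
    have h4 : ContMDiffAt I 𝓘(ℝ, ℝ) (⊤ : ℕ∞)
        ((fun y : E => (L ((0 : ℝ), y)).1) ∘ (extChartAt I x₀)) x₀ :=
      ContMDiffAt.comp x₀ h1.contMDiffAt contMDiffAt_extChartAt
    exact h4
  -- τ agrees with σ near x₀
  have hev : τ =ᶠ[nhds x₀] σ := by
    have e1 : ∀ᶠ x in nhds x₀, x ∈ ψ.source := extChartAt_source_mem_nhds x₀
    have e2 : ∀ᶠ x in nhds x₀, Ψ (L ((0 : ℝ), ψ x)) = ((0 : ℝ), ψ x) := by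
      have hc : ContinuousAt (fun x : M => ((0 : ℝ), ψ x)) x₀ :=
        continuousAt_const.prodMk (continuousAt_extChartAt x₀)
      have : Filter.Tendsto (fun x : M => ((0 : ℝ), ψ x)) (nhds x₀) (nhds (Ψ p₀)) := by
        rw [hΨp₀]; exact hc
      exact this.eventually hri
    filter_upwards [e1, e2] with x hx1 hx2
    have hx3 : g (L ((0 : ℝ), ψ x)) = 0 := congrArg Prod.fst hx2
    have hx4 : (L ((0 : ℝ), ψ x)).2 = ψ x := congrArg Prod.snd hx2
    have hx5 : h (Φ (σ x, x)) = 0 := by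
      have : ψ.symm (ψ x) = x := (extChartAt I x₀).left_inv hx1
      rw [hσ]
      simpa [hgdef, hx4, this] using hx3
    have : h (Φ (τ x, x)) = h (Φ (σ x, x)) := by rw [hτ x, hx5]
    exact (hmono x).injective this
  exact hσsm.congr_of_eventuallyEq hev
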